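/- (Proposition 1, second bound) There is an absolute constant K such that for all integers N ≥ 4, |G(N) − N²/2| ≤ K · ( |R₁(N)| + N·√(max_{0 ≤ u ≤ 3N/2} |R₁(u)|) ). -/

import Mathlib

noncomputable def Lam (n : ℕ) : ℝ := ArithmeticFunction.vonMangoldt n

/-- ψ₂(n) = Σ_{m+m'=n, m,m'≥1} Λ(m)Λ(m')  (terms with m = 0 vanish since Λ(0)=0). -/
noncomputable def psi2 (n : ℕ) : ℝ := ∑ m ∈ Finset.range n, Lam m * Lam (n - m)

/-- G(N) = Σ_{n ≤ N} ψ₂(n). -/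
noncomputable def G (N : ℕ) : ℝ := ∑ n ∈ Finset.Icc 1 N, psi2 n

/-- ψ(x) = Σ_{n ≤ x} Λ(n). -/
noncomputable def psi (x : ℝ) : ℝ := ∑ n ∈ Finset.Icc 1 ⌊x⌋₊, Lam n

/-- R(x) = ψ(x) − x. -/
noncomputable def RR (x : ℝ) : ℝ := psi x - x

/-- ψ₁(x) = Σ_{n ≤ x} (x − n)Λ(n). -/
noncomputable def psi1 (x : ℝ) : ℝ := ∑ n ∈ Finset.Icc 1 ⌊x⌋₊, (x - (n : ℝ)) * Lam n

/-- R₁(x) = ψ₁(x) − x²/2. -/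
noncomputable def R1 (x : ℝ) : ℝ := psi1 x - x ^ 2 / 2

/-- Λ₀(n) = Λ(n) − 1 for n ≥ 1, and 0 otherwise. -/
noncomputable def Lam0 (n : ℕ) : ℝ := if 1 ≤ n then Lam n - 1 else 0

/-- ψ₂⁰(n) = Σ_{m+m'=n, m,m'≥1} Λ₀(m)Λ₀(m')  (the m = 0 term vanishes since Λ₀(0)=0). -/
noncomputable def psi20 (n : ℕ) : ℝ := ∑ m ∈ Finset.range n, Lam0 m * Lam0 (n - m)

/-- Ψ(z) = Σ_{n ≥ 1} Λ(n) zⁿ. -/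
noncomputable def PsiC (z : ℂ) : ℂ := ∑' n : ℕ, (Lam n : ℂ) * z ^ n

/-- K_N(z) = Σ_{n=1}^{N} z^{−n}. -/
noncomputable def KN (N : ℕ) (z : ℂ) : ℂ := ∑ n ∈ Finset.Icc 1 N, z ^ (-(n : ℤ))

/-- ω(x) = inf_{u ≥ 1} (η(u)·log x + log u). -/
noncomputable def omegaFn (η : ℝ → ℝ) (x : ℝ) : ℝ :=
  sInf ((fun u => η u * Real.log x + Real.log u) '' Set.Ici 1)

/-- ϖ(x) = inf_{u ≥ 0} (η(u)·log x + u). -/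
noncomputable def varpi (η : ℝ → ℝ) (x : ℝ) : ℝ :=
  sInf ((fun u => η u * Real.log x + u) '' Set.Ici 0)

/-- F(N) = Σ_{n ≥ 1} ψ₂(n) e^{−n/N}  (the n = 0 term vanishes since ψ₂(0)=0). -/
noncomputable def Fav (N : ℕ) : ℝ := ∑' n : ℕ, psi2 n * Real.exp (-(n : ℝ) / N)


/-! ### Auxiliary definitions and lemmas -/

open Finset

noncomputable def psiN (k : ℕ) : ℝ := ∑ n ∈ Finset.Icc 1 k, Lam n
noncomputable def Rn (k : ℕ) : ℝ := psiN k - k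
noncomputable def psi1N (N : ℕ) : ℝ := ∑ n ∈ Finset.Icc 1 N, ((N : ℝ) - n) * Lam n
noncomputable def EE (N : ℕ) : ℝ := ∑ m ∈ Finset.Icc 1 (N - 1), Lam0 m * Rn (N - m)

lemma Lam_nonneg (n : ℕ) : 0 ≤ Lam n := ArithmeticFunction.vonMangoldt_nonneg
lemma Lam_zero : Lam 0 = 0 := by simp [Lam]
lemma Lam_one : Lam 1 = 0 := by simp [Lam]

lemma psiN_zero : psiN 0 = 0 := by simp [psiN]
lemma psiN_one : psiN 1 = 0 := by simp [psiN, Lam_one]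
lemma psiN_succ (k : ℕ) : psiN (k + 1) = psiN k + Lam (k + 1) := by
  rw [psiN, psiN, Finset.sum_Icc_succ_top (by omega : 1 ≤ k + 1)]

lemma psiN_nonneg (k : ℕ) : 0 ≤ psiN k := Finset.sum_nonneg fun n _ => Lam_nonneg n

lemma psiN_mono : Monotone psiN := by
  intro a b hab
  exact Finset.sum_le_sum_of_subset_of_nonneg (Finset.Icc_subset_Icc le_rfl hab)
    (fun n _ _ => Lam_nonneg n)

lemma range_succ_eq_insert (N : ℕ) : Finset.range (N + 1) = insert 0 (Finset.Icc 1 N) := by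
  ext x; simp [Nat.lt_succ_iff]; omega

lemma psi1N_succ (N : ℕ) : psi1N (N + 1) = psi1N N + psiN N := by
  rw [psi1N, psi1N, psiN, Finset.sum_Icc_succ_top (by omega : 1 ≤ N + 1)]
  push_cast
  rw [sub_self, zero_mul, add_zero, ← Finset.sum_add_distrib]
  exact Finset.sum_congr rfl fun n _ => by ring

lemma psi1N_eq_sum (N : ℕ) : psi1N N = ∑ k ∈ Finset.range N, psiN k := by
  induction N with
  | zero => simp [psi1N]
  | succ n ih => rw [psi1N_succ, Finset.sum_range_succ, ih]

lemma G_range (N : ℕ) :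
    (∑ n ∈ Finset.range (N + 1), psi2 n) = ∑ m ∈ Finset.range N, Lam m * psiN (N - m) := by
  induction N with
  | zero => simp [psi2]
  | succ N ih =>
    rw [Finset.sum_range_succ, ih]
    have h1 : ∀ m ∈ Finset.range N, Lam m * psiN (N + 1 - m)
        = Lam m * psiN (N - m) + Lam m * Lam (N + 1 - m) := by
      intro m hm
      simp only [Finset.mem_range] at hm
      have : N + 1 - m = (N - m) + 1 := by omega
      rw [this, psiN_succ, mul_add, ← this]
    rw [Finset.sum_range_succ (f := fun m => Lam m * psiN (N + 1 - m)),
      Finset.sum_congr rfl h1, Finset.sum_add_distrib]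
    have h2 : psi2 (N + 1) = ∑ m ∈ Finset.range N, Lam m * Lam (N + 1 - m) := by
      rw [psi2, Finset.sum_range_succ]
      simp [Lam_one]
    have h3 : N + 1 - N = 1 := by omega
    rw [h2, h3, psiN_one]
    ring

lemma G_eq_conv (N : ℕ) (hN : 1 ≤ N) :
    G N = ∑ m ∈ Finset.Icc 1 (N - 1), Lam m * psiN (N - m) := by
  have h0 : G N = ∑ n ∈ Finset.range (N + 1), psi2 n := by
    rw [range_succ_eq_insert, Finset.sum_insert (by simp)]
    simp [G, psi2]
  rw [h0, G_range]
  have hN' : N = (N - 1) + 1 := by omega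
  rw [hN', range_succ_eq_insert, Finset.sum_insert (by simp), ← hN']
  simp [Lam_zero]

lemma psi1_natCast (N : ℕ) : psi1 (N : ℝ) = psi1N N := by
  rw [psi1, psi1N, Nat.floor_natCast]

lemma main_identity (N : ℕ) (hN : 1 ≤ N) :
    G N - (N : ℝ) ^ 2 / 2 = 2 * R1 (N : ℝ) + (N : ℝ) / 2 + EE N := by
  have step1 := G_eq_conv N hN
  have step2 : ∀ m ∈ Finset.Icc 1 (N - 1),
      Lam m * psiN (N - m) = ((N : ℝ) - m) * Lam m + (Rn (N - m) + Lam0 m * Rn (N - m)) := by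
    intro m hm
    simp only [Finset.mem_Icc] at hm
    have hc : ((N - m : ℕ) : ℝ) = (N : ℝ) - m := by
      have : m ≤ N := by omega
      push_cast [this]; ring
    rw [Lam0, if_pos hm.1, Rn, hc]
    ring
  rw [Finset.sum_congr rfl step2, Finset.sum_add_distrib, Finset.sum_add_distrib] at step1
  -- first sum is psi1N N
  have hfirst : ∑ m ∈ Finset.Icc 1 (N - 1), ((N : ℝ) - m) * Lam m = psi1N N := by
    rw [psi1N]
    have hN' : N = (N - 1) + 1 := by omega
    conv_rhs => rw [hN']
    rw [Finset.sum_Icc_succ_top (by omega : 1 ≤ (N - 1) + 1), ← hN']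
    simp
  -- middle sum: reflect
  have hrefl : ∑ m ∈ Finset.Icc 1 (N - 1), Rn (N - m) = ∑ k ∈ Finset.Icc 1 (N - 1), Rn k := by
    refine Finset.sum_nbij' (i := fun m => N - m) (j := fun k => N - k) ?_ ?_ ?_ ?_ ?_ <;>
      intro a ha <;> simp only [Finset.mem_Icc] at * <;> omega
  have hsum : ∑ k ∈ Finset.Icc 1 (N - 1), Rn k
      = psi1N N - (N : ℝ) * ((N : ℝ) - 1) / 2 := by
    simp only [Rn, Finset.sum_sub_distrib]
    have h1 : ∑ k ∈ Finset.Icc 1 (N - 1), psiN k = psi1N N := by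
      rw [psi1N_eq_sum]
      have hN' : N = (N - 1) + 1 := by omega
      conv_rhs => rw [hN', range_succ_eq_insert]
      rw [Finset.sum_insert (by simp), psiN_zero, zero_add]
    have h2 : ∑ k ∈ Finset.Icc 1 (N - 1), (k : ℝ) = (N : ℝ) * ((N : ℝ) - 1) / 2 := by
      have := Finset.sum_range_id_mul_two N
      have hcast : (∑ i ∈ Finset.range N, (i : ℝ)) * 2 = (N : ℝ) * ((N : ℝ) - 1) := by
        have hc2 : ((∑ i ∈ Finset.range N, i : ℕ) : ℝ) * 2 = ((N * (N - 1) : ℕ) : ℝ) := by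
          rw [← Nat.cast_ofNat, ← Nat.cast_mul, this]
        push_cast [Nat.cast_sub (by omega : 1 ≤ N)] at hc2
        convert hc2 using 2 <;> push_cast <;> ring
      have hr : ∑ i ∈ Finset.range N, (i : ℝ) = ∑ k ∈ Finset.Icc 1 (N - 1), (k : ℝ) := by
        have hN' : N = (N - 1) + 1 := by omega
        conv_lhs => rw [hN', range_succ_eq_insert, Finset.sum_insert (by simp)]
        simp
      rw [hr] at hcast
      linarith
    rw [h1, h2]
  rw [hfirst, hrefl, hsum] at step1
  have hR1 : R1 (N : ℝ) = psi1N N - (N : ℝ) ^ 2 / 2 := by rw [R1, psi1_natCast]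
  rw [step1, hR1, EE]
  ring

lemma Lam_le_log (n : ℕ) : Lam n ≤ Real.log n := ArithmeticFunction.vonMangoldt_le_log

lemma theta_bound (N : ℕ) :
    ∑ p ∈ (Finset.Icc 1 N).filter Nat.Prime, Real.log p ≤ (N : ℝ) * Real.log 4 := by
  have hset : (Finset.Icc 1 N).filter Nat.Prime = (Finset.range (N + 1)).filter Nat.Prime := by
    ext p
    simp only [Finset.mem_filter, Finset.mem_Icc, Finset.mem_range]
    constructor
    · rintro ⟨⟨h1, h2⟩, hp⟩; exact ⟨by omega, hp⟩
    · rintro ⟨h1, hp⟩; exact ⟨⟨hp.one_lt.le.trans' (by omega), by omega⟩, hp⟩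
  rw [hset]
  have hlog : ∑ p ∈ (Finset.range (N + 1)).filter Nat.Prime, Real.log p
      = Real.log (primorial N) := by
    rw [primorial]
    push_cast
    rw [Real.log_prod]
    intro p hp
    simp only [Finset.mem_filter] at hp
    exact_mod_cast hp.2.pos.ne'
  rw [hlog]
  calc Real.log (primorial N) ≤ Real.log ((4 : ℕ) ^ N) := by
        apply Real.log_le_log (by exact_mod_cast primorial_pos N)
        exact_mod_cast primorial_le_4_pow N
    _ = (N : ℝ) * Real.log 4 := by push_cast; rw [Real.log_pow]

lemma nonprime_card (N : ℕ) :
    ((Finset.Icc 1 N).filter (fun n => ¬ n.Prime ∧ IsPrimePow n)).card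
      ≤ Nat.sqrt N * Nat.log 2 N := by
  classical
  have := Finset.card_le_card_of_injOn
    (f := fun n => (n.minFac, (Nat.factorization n) n.minFac))
    (s := (Finset.Icc 1 N).filter (fun n => ¬ n.Prime ∧ IsPrimePow n))
    (t := Finset.Icc 2 (Nat.sqrt N) ×ˢ Finset.Icc 2 (Nat.log 2 N))
  have hmem : ∀ n ∈ (Finset.Icc 1 N).filter (fun n => ¬ n.Prime ∧ IsPrimePow n),
      (n.minFac, (Nat.factorization n) n.minFac) ∈
        Finset.Icc 2 (Nat.sqrt N) ×ˢ Finset.Icc 2 (Nat.log 2 N) := by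
    intro n hn
    simp only [Finset.mem_filter, Finset.mem_Icc] at hn
    obtain ⟨⟨h1, h2⟩, hnp, hpp⟩ := hn
    have h2le : 2 ≤ n := hpp.two_le
    have hne1 : n ≠ 1 := by omega
    have heq : n.minFac ^ (Nat.factorization n) n.minFac = n := hpp.minFac_pow_factorization_eq
    have hpmin : n.minFac.Prime := Nat.minFac_prime hne1
    set p := n.minFac
    set k := (Nat.factorization n) n.minFac
    have hk2 : 2 ≤ k := by
      rcases Nat.lt_or_ge k 2 with hk | hk
      · interval_cases k
        · simp at heq; omega
        · simp at heq; rw [heq] at hpmin; exact absurd hpmin hnp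
      · exact hk
    have hp2 : 2 ≤ p := hpmin.two_le
    have hpsq : p * p ≤ N := by
      have : p ^ 2 ≤ p ^ k := Nat.pow_le_pow_right (by omega) hk2
      rw [heq] at this
      calc p * p = p ^ 2 := by ring
        _ ≤ n := this
        _ ≤ N := h2
    have h2k : 2 ^ k ≤ N := by
      have : 2 ^ k ≤ p ^ k := Nat.pow_le_pow_left hp2 k
      rw [heq] at this; omega
    simp only [Finset.mem_product, Finset.mem_Icc]
    refine ⟨⟨hp2, Nat.le_sqrt.2 hpsq⟩, ⟨hk2, ?_⟩⟩
    exact (Nat.le_log_iff_pow_le one_lt_two (by omega)).2 h2k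
  have hinj : Set.InjOn (fun n => (n.minFac, (Nat.factorization n) n.minFac))
      ((Finset.Icc 1 N).filter (fun n => ¬ n.Prime ∧ IsPrimePow n)) := by
    intro a ha b hb hab
    simp only [Finset.coe_filter, Set.mem_setOf_eq, Finset.mem_Icc] at ha hb
    have ha' : a.minFac ^ (Nat.factorization a) a.minFac = a :=
      ha.2.2.minFac_pow_factorization_eq
    have hb' : b.minFac ^ (Nat.factorization b) b.minFac = b :=
      hb.2.2.minFac_pow_factorization_eq
    simp only [Prod.mk.injEq] at hab
    rw [← ha', ← hb', hab.2, hab.1]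
  have hcard := this hmem hinj
  calc ((Finset.Icc 1 N).filter (fun n => ¬ n.Prime ∧ IsPrimePow n)).card
      ≤ (Finset.Icc 2 (Nat.sqrt N) ×ˢ Finset.Icc 2 (Nat.log 2 N)).card := hcard
    _ ≤ Nat.sqrt N * Nat.log 2 N := by
        rw [Finset.card_product, Nat.card_Icc, Nat.card_Icc]
        exact Nat.mul_le_mul (by omega) (by omega)

lemma log_le_four_rpow (N : ℕ) (hN : 1 ≤ N) :
    Real.log N ≤ 4 * Real.sqrt (Real.sqrt N) := by
  have hN1 : (1 : ℝ) ≤ (N : ℝ) := by exact_mod_cast hN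
  set t := Real.sqrt (Real.sqrt N) with ht
  have ht1 : 1 ≤ t := Real.one_le_sqrt.2 (Real.one_le_sqrt.2 hN1)
  have hlog : Real.log N = 4 * Real.log t := by
    rw [ht, Real.log_sqrt (Real.sqrt_nonneg _), Real.log_sqrt (by positivity)]
    ring
  rw [hlog]
  have : Real.log t ≤ t - 1 := Real.log_le_sub_one_of_pos (by linarith)
  nlinarith

lemma psiN_cheby (N : ℕ) : psiN N ≤ 34 * N := by
  rcases Nat.eq_zero_or_pos N with rfl | hN
  · simp [psiN]
  classical
  have hsplit : psiN N = (∑ p ∈ (Finset.Icc 1 N).filter Nat.Prime, Lam p)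
      + ∑ n ∈ (Finset.Icc 1 N).filter (fun n => ¬ n.Prime), Lam n := by
    rw [psiN, ← Finset.sum_filter_add_sum_filter_not (Finset.Icc 1 N) Nat.Prime]
  -- prime part
  have hprime : ∑ p ∈ (Finset.Icc 1 N).filter Nat.Prime, Lam p ≤ (N : ℝ) * Real.log 4 := by
    refine le_trans (Finset.sum_le_sum fun p hp => ?_) (theta_bound N)
    exact Lam_le_log p
  -- nonprime part
  have hlogN0 : 0 ≤ Real.log N := Real.log_natCast_nonneg N
  have hnonprime : ∑ n ∈ (Finset.Icc 1 N).filter (fun n => ¬ n.Prime), Lam n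
      ≤ ((Nat.sqrt N * Nat.log 2 N : ℕ) : ℝ) * Real.log N := by
    have hzero : ∑ n ∈ (Finset.Icc 1 N).filter (fun n => ¬ n.Prime), Lam n
        = ∑ n ∈ (Finset.Icc 1 N).filter (fun n => ¬ n.Prime ∧ IsPrimePow n), Lam n := by
      symm
      apply Finset.sum_subset
      · intro x hx
        simp only [Finset.mem_filter] at *
        tauto
      · intro x _ hnx
        simp only [Finset.mem_filter] at *
        have : ¬ IsPrimePow x := by tauto
        simpa [Lam] using ArithmeticFunction.vonMangoldt_eq_zero_iff.2 this
    rw [hzero]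
    have hbound : ∀ n ∈ (Finset.Icc 1 N).filter (fun n => ¬ n.Prime ∧ IsPrimePow n),
        Lam n ≤ Real.log N := by
      intro n hn
      simp only [Finset.mem_filter, Finset.mem_Icc] at hn
      refine (Lam_le_log n).trans (Real.log_le_log ?_ ?_)
      · exact_mod_cast hn.1.1
      · exact_mod_cast hn.1.2
    calc ∑ n ∈ (Finset.Icc 1 N).filter (fun n => ¬ n.Prime ∧ IsPrimePow n), Lam n
        ≤ ∑ _n ∈ (Finset.Icc 1 N).filter (fun n => ¬ n.Prime ∧ IsPrimePow n), Real.log N :=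
          Finset.sum_le_sum hbound
      _ = (((Finset.Icc 1 N).filter (fun n => ¬ n.Prime ∧ IsPrimePow n)).card : ℝ)
            * Real.log N := by rw [Finset.sum_const, nsmul_eq_mul]
      _ ≤ ((Nat.sqrt N * Nat.log 2 N : ℕ) : ℝ) * Real.log N := by
          apply mul_le_mul_of_nonneg_right _ hlogN0
          exact_mod_cast nonprime_card N
  -- numeric part
  have hN1 : (1 : ℝ) ≤ (N : ℝ) := by exact_mod_cast hN
  set t := Real.sqrt (Real.sqrt N) with ht
  have ht1 : 1 ≤ t := Real.one_le_sqrt.2 (Real.one_le_sqrt.2 hN1)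
  have ht4 : t ^ 2 = Real.sqrt N := Real.sq_sqrt (Real.sqrt_nonneg _)
  have htN : (t ^ 2) ^ 2 = (N : ℝ) := by rw [ht4]; exact Real.sq_sqrt (by positivity)
  have hlogt : Real.log N ≤ 4 * t := log_le_four_rpow N hN
  have hsqrt : ((Nat.sqrt N : ℕ) : ℝ) ≤ t ^ 2 := by
    rw [ht4]
    rw [show ((Nat.sqrt N : ℕ) : ℝ) = Real.sqrt (((Nat.sqrt N : ℕ) : ℝ) ^ 2) from
      (Real.sqrt_sq (by positivity)).symm]
    apply Real.sqrt_le_sqrt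
    exact_mod_cast Nat.sqrt_le' N
  have hlog2 : ((Nat.log 2 N : ℕ) : ℝ) ≤ 2 * Real.log N := by
    have hp : (2 : ℕ) ^ Nat.log 2 N ≤ N := Nat.pow_log_le_self 2 (by omega)
    have hp' : ((Nat.log 2 N : ℕ) : ℝ) * Real.log 2 ≤ Real.log N := by
      have := Real.log_le_log (by positivity : (0:ℝ) < ((2:ℕ) ^ Nat.log 2 N : ℕ))
        (by exact_mod_cast hp : (((2:ℕ) ^ Nat.log 2 N : ℕ) : ℝ) ≤ (N : ℝ))
      rwa [Nat.cast_pow, Real.log_pow, Nat.cast_ofNat] at this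
    nlinarith [Real.log_two_gt_d9, hlogN0]
  have hlog4 : Real.log 4 ≤ 1.4 := by
    rw [show (4 : ℝ) = 2 ^ 2 by norm_num, Real.log_pow]
    push_cast
    nlinarith [Real.log_two_lt_d9]
  rw [hsplit]
  have hfinal : ((Nat.sqrt N * Nat.log 2 N : ℕ) : ℝ) * Real.log N ≤ 32 * N := by
    push_cast
    calc ((Nat.sqrt N : ℕ) : ℝ) * ((Nat.log 2 N : ℕ) : ℝ) * Real.log N
        ≤ (t ^ 2) * (2 * Real.log N) * Real.log N := by
          apply mul_le_mul
          · apply mul_le_mul hsqrt hlog2 (by positivity) (by positivity)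
          · exact le_rfl
          · exact hlogN0
          · positivity
      _ ≤ (t ^ 2) * (2 * (4 * t)) * (4 * t) := by
          have h1 : t ^ 2 * (2 * Real.log N) ≤ t ^ 2 * (2 * (4 * t)) := by
            apply mul_le_mul_of_nonneg_left (by linarith) (by positivity)
          apply mul_le_mul h1 hlogt hlogN0 (by positivity)
      _ = 32 * (t ^ 2) ^ 2 := by ring
      _ = 32 * N := by rw [htN]
  have : (N : ℝ) * Real.log 4 ≤ 1.4 * N := by nlinarith
  calc (∑ p ∈ (Finset.Icc 1 N).filter Nat.Prime, Lam p)
        + ∑ n ∈ (Finset.Icc 1 N).filter (fun n => ¬ n.Prime), Lam n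
      ≤ (N : ℝ) * Real.log 4 + ((Nat.sqrt N * Nat.log 2 N : ℕ) : ℝ) * Real.log N :=
        add_le_add hprime hnonprime
    _ ≤ 1.4 * N + 32 * N := add_le_add this hfinal
    _ ≤ 34 * N := by nlinarith

lemma R1_succ_sub (k : ℕ) : R1 ((k + 1 : ℕ) : ℝ) - R1 ((k : ℕ) : ℝ) = Rn k - 1 / 2 := by
  rw [R1, R1, psi1_natCast, psi1_natCast, psi1N_succ, Rn]
  push_cast
  ring

lemma R1_sum_Ico (a b : ℕ) (h : a ≤ b) :
    R1 ((b : ℕ) : ℝ) - R1 ((a : ℕ) : ℝ) = ∑ m ∈ Finset.Ico a b, (Rn m - 1 / 2) := by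
  induction b, h using Nat.le_induction with
  | base => simp
  | succ b hb ih =>
    rw [Finset.sum_Ico_succ_top hb, ← ih, ← R1_succ_sub b]
    ring

lemma Rn_lower {k m : ℕ} (h : k ≤ m) : Rn k - ((m : ℝ) - k) ≤ Rn m := by
  have := psiN_mono h
  rw [Rn, Rn]
  have hc : (k : ℝ) ≤ (m : ℝ) := by exact_mod_cast h
  linarith

lemma Rn_triv (k : ℕ) : |Rn k| ≤ 35 * k := by
  rw [abs_le, Rn]
  have h1 := psiN_nonneg k
  have h2 := psiN_cheby k
  have : (0 : ℝ) ≤ k := Nat.cast_nonneg k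
  constructor <;> linarith

set_option maxHeartbeats 1000000 in
/-- The key almost-monotonicity bound: |R(k)| ≤ 105 √S for integer k ≤ N. -/
lemma Rn_sup_bound (N : ℕ) (hN : 4 ≤ N) (S : ℝ)
    (hS : ∀ u : ℝ, u ∈ Set.Icc 0 (3 * (N : ℝ) / 2) → |R1 u| ≤ S)
    (hS1 : 1 ≤ S) (k : ℕ) (hk : k ≤ N) :
    |Rn k| ≤ 105 * Real.sqrt S := by
  set s := Real.sqrt S with hs
  have hS0 : (0 : ℝ) ≤ S := by linarith
  have hs1 : 1 ≤ s := Real.one_le_sqrt.2 hS1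
  have hs2 : s ^ 2 = S := Real.sq_sqrt hS0
  have hN0 : (4 : ℝ) ≤ (N : ℝ) := by exact_mod_cast hN
  by_cases hL : Nat.floor s ≤ N / 2
  · -- main branch
    set L := Nat.floor s with hLdef
    have hL1 : 1 ≤ L := Nat.le_floor (by exact_mod_cast hs1)
    have hLs : (L : ℝ) ≤ s := Nat.floor_le (by linarith)
    have hLs2 : s ≤ (L : ℝ) + 1 := (Nat.lt_floor_add_one s).le
    have hLhalf : s / 2 ≤ (L : ℝ) := by
      have : (1 : ℝ) ≤ L := by exact_mod_cast hL1
      linarith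
    have hLpos : (0 : ℝ) < L := by positivity
    have hLN : (L : ℝ) ≤ (N : ℝ) / 2 := by
      have h1 : (L : ℝ) ≤ ((N / 2 : ℕ) : ℝ) := by exact_mod_cast hL
      have h2 : ((N / 2 : ℕ) : ℝ) ≤ (N : ℝ) / 2 := by
        have := Nat.div_mul_le_self N 2
        have : ((N / 2 : ℕ) : ℝ) * 2 ≤ (N : ℝ) := by exact_mod_cast this
        linarith
      linarith
    rcases le_or_gt 0 (Rn k) with hpos | hneg
    · -- positive case
      have hsum := R1_sum_Ico k (k + L) (by omega)
      have hterm : ∀ m ∈ Finset.Ico k (k + L), Rn k - (L : ℝ) ≤ Rn m - 1 / 2 := by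
        intro m hm
        simp only [Finset.mem_Ico] at hm
        have h1 := Rn_lower hm.1
        have h2 : (m : ℝ) - k ≤ (L : ℝ) - 1 := by
          have : m + 1 ≤ k + L := hm.2
          have : (m : ℝ) + 1 ≤ (k : ℝ) + L := by exact_mod_cast this
          linarith
        linarith
      have hsum_ge : (L : ℝ) * (Rn k - L) ≤ R1 ((k + L : ℕ) : ℝ) - R1 ((k : ℕ) : ℝ) := by
        rw [hsum]
        calc (L : ℝ) * (Rn k - L) = ∑ _m ∈ Finset.Ico k (k + L), (Rn k - (L : ℝ)) := by
              rw [Finset.sum_const, Nat.card_Ico, Nat.add_sub_cancel_left, nsmul_eq_mul]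
          _ ≤ _ := Finset.sum_le_sum hterm
      have hin1 : ((k + L : ℕ) : ℝ) ∈ Set.Icc 0 (3 * (N : ℝ) / 2) := by
        constructor
        · positivity
        · push_cast
          have : (k : ℝ) ≤ N := by exact_mod_cast hk
          linarith
      have hin2 : ((k : ℕ) : ℝ) ∈ Set.Icc 0 (3 * (N : ℝ) / 2) := by
        constructor
        · positivity
        · have : (k : ℝ) ≤ N := by exact_mod_cast hk
          linarith
      have hb1 := hS _ hin1
      have hb2 := hS _ hin2
      have habs : R1 ((k + L : ℕ) : ℝ) - R1 ((k : ℕ) : ℝ) ≤ 2 * S := by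
        have := abs_le.1 hb1
        have := abs_le.1 hb2
        linarith [(abs_le.1 hb1).2, (abs_le.1 hb2).1]
      -- L (Rn k - L) ≤ 2 s², so Rn k ≤ 2s²/L + L ≤ 4s + s = 5s
      have hRk : Rn k ≤ 5 * s := by
        have h1 : (L : ℝ) * (Rn k - L) ≤ 2 * s ^ 2 := by rw [hs2]; linarith
        by_contra hc
        push_neg at hc
        have e1 : 4 * s < Rn k - L := by linarith
        have e2 : (L : ℝ) * (4 * s) < L * (Rn k - L) := mul_lt_mul_of_pos_left e1 hLpos
        have e3 : 2 * s ^ 2 ≤ (L : ℝ) * (4 * s) := by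
          nlinarith [mul_nonneg (by linarith : (0:ℝ) ≤ s) (by linarith : 0 ≤ (L : ℝ) - s / 2)]
        linarith
      rw [abs_of_nonneg hpos]
      nlinarith
    · -- negative case
      rcases Nat.lt_or_ge k L with hkL | hkL
      · -- k < L : |Rn k| ≤ k < L ≤ s
        have h1 : -(k : ℝ) ≤ Rn k := by
          rw [Rn]; have := psiN_nonneg k; linarith
        rw [abs_of_neg hneg]
        have : (k : ℝ) ≤ s := by
          have : (k : ℝ) < L := by exact_mod_cast hkL
          linarith
        nlinarith
      · -- L ≤ k
        have hsum := R1_sum_Ico (k - L) k (by omega)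
        have hterm : ∀ m ∈ Finset.Ico (k - L) k, Rn m - 1 / 2 ≤ Rn k + L := by
          intro m hm
          simp only [Finset.mem_Ico] at hm
          have h1 := Rn_lower hm.2.le
          have h2 : (k : ℝ) - m ≤ (L : ℝ) := by
            have : k - L ≤ m := hm.1
            have : (k : ℝ) - L ≤ (m : ℝ) := by
              have hc : ((k - L : ℕ) : ℝ) = (k : ℝ) - L := by
                push_cast [hkL]; ring
              rw [← hc]; exact_mod_cast this
            linarith
          linarith
        have hsum_le : R1 ((k : ℕ) : ℝ) - R1 ((k - L : ℕ) : ℝ) ≤ (L : ℝ) * (Rn k + L) := by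
          rw [hsum]
          calc ∑ m ∈ Finset.Ico (k - L) k, (Rn m - 1 / 2)
              ≤ ∑ _m ∈ Finset.Ico (k - L) k, (Rn k + (L : ℝ)) := Finset.sum_le_sum hterm
            _ = (L : ℝ) * (Rn k + L) := by
                have hcard : k - (k - L) = L := by omega
                rw [Finset.sum_const, Nat.card_Ico, hcard, nsmul_eq_mul]
        have hin1 : ((k : ℕ) : ℝ) ∈ Set.Icc 0 (3 * (N : ℝ) / 2) := by
          constructor
          · positivity
          · have : (k : ℝ) ≤ N := by exact_mod_cast hk
            linarith
        have hin2 : ((k - L : ℕ) : ℝ) ∈ Set.Icc 0 (3 * (N : ℝ) / 2) := by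
          have ha : ((k - L : ℕ) : ℝ) ≤ (k : ℝ) := by exact_mod_cast Nat.sub_le k L
          have hb : (k : ℝ) ≤ (N : ℝ) := by exact_mod_cast hk
          constructor
          · positivity
          · linarith
        have hb1 := hS _ hin1
        have hb2 := hS _ hin2
        have habs : -(2 * S) ≤ R1 ((k : ℕ) : ℝ) - R1 ((k - L : ℕ) : ℝ) := by
          linarith [(abs_le.1 hb1).1, (abs_le.1 hb2).2]
        have hRk : -(Rn k) ≤ 5 * s := by
          have h1 : -(2 * s ^ 2) ≤ (L : ℝ) * (Rn k + L) := by rw [hs2]; linarith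
          by_contra hc
          push_neg at hc
          have e1 : Rn k + L < -(4 * s) := by linarith
          have e2 : (L : ℝ) * (Rn k + L) < L * (-(4 * s)) := mul_lt_mul_of_pos_left e1 hLpos
          have e3 : (L : ℝ) * (-(4 * s)) ≤ -(2 * s ^ 2) := by
            nlinarith [mul_nonneg (by linarith : (0:ℝ) ≤ s) (by linarith : 0 ≤ (L : ℝ) - s / 2)]
          linarith
        rw [abs_of_neg hneg]
        linarith
  · -- trivial branch : N ≤ 3s
    push_neg at hL
    have h1 : ((N / 2 : ℕ) : ℝ) + 1 ≤ (Nat.floor s : ℝ) := by exact_mod_cast hL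
    have h2 : (Nat.floor s : ℝ) ≤ s := Nat.floor_le (by linarith)
    have h3 : (N : ℝ) ≤ 2 * ((N / 2 : ℕ) : ℝ) + 1 := by
      exact_mod_cast (by omega : N ≤ 2 * (N / 2) + 1)
    have hNs : (N : ℝ) ≤ 2 * s := by linarith
    have htriv := Rn_triv k
    have hkN : (k : ℝ) ≤ (N : ℝ) := by exact_mod_cast hk
    calc |Rn k| ≤ 35 * k := htriv
      _ ≤ 35 * (N : ℝ) := by linarith
      _ ≤ 105 * s := by linarith

lemma psi1_nonneg_of (u : ℝ) (hu : 0 ≤ u) : 0 ≤ psi1 u := by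
  apply Finset.sum_nonneg
  intro n hn
  simp only [Finset.mem_Icc] at hn
  have h1 : (n : ℝ) ≤ u := by
    calc (n : ℝ) ≤ (⌊u⌋₊ : ℝ) := by exact_mod_cast hn.2
      _ ≤ u := Nat.floor_le hu
  exact mul_nonneg (by linarith) (Lam_nonneg n)

lemma psi1_upper (N : ℕ) (u : ℝ) (hu : 0 ≤ u) (hu2 : u ≤ 3 * (N : ℝ) / 2) :
    psi1 u ≤ (3 * (N : ℝ) / 2) * psiN (2 * N) := by
  have hfl : ⌊u⌋₊ ≤ 2 * N := by
    have : u ≤ ((2 * N : ℕ) : ℝ) := by push_cast; linarith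
    calc ⌊u⌋₊ ≤ ⌊((2 * N : ℕ) : ℝ)⌋₊ := Nat.floor_le_floor this
      _ = 2 * N := Nat.floor_natCast _
  calc psi1 u ≤ ∑ n ∈ Finset.Icc 1 ⌊u⌋₊, u * Lam n := by
        apply Finset.sum_le_sum
        intro n hn
        simp only [Finset.mem_Icc] at hn
        apply mul_le_mul_of_nonneg_right _ (Lam_nonneg n)
        have : (0 : ℝ) ≤ n := Nat.cast_nonneg n
        linarith
    _ = u * psiN ⌊u⌋₊ := by rw [← Finset.mul_sum]; rfl
    _ ≤ (3 * (N : ℝ) / 2) * psiN (2 * N) := by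
        apply mul_le_mul hu2 (psiN_mono hfl) (psiN_nonneg _) (by positivity)

lemma R1_two : R1 (2 : ℝ) = -2 := by
  have h2 : ⌊(2 : ℝ)⌋₊ = 2 := by norm_num
  have hIcc : Finset.Icc 1 2 = {1, 2} := rfl
  rw [R1, psi1, h2, hIcc]
  rw [Finset.sum_insert (by decide), Finset.sum_singleton]
  have l1 : Lam 1 = 0 := by simp [Lam]
  rw [l1]
  norm_num

/-- Proposition 1, second bound:
|G(N) − N²/2| ≤ K·(|R₁(N)| + N·√(max_{0 ≤ u ≤ 3N/2} |R₁(u)|)) for N ≥ 4. -/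
theorem stmt_3 : ∃ K : ℝ, ∀ N : ℕ, 4 ≤ N →
    |G N - (N : ℝ) ^ 2 / 2| ≤
      K * (|R1 (N : ℝ)| +
        (N : ℝ) * Real.sqrt (sSup ((fun u => |R1 u|) '' Set.Icc 0 (3 * (N : ℝ) / 2)))) := by
  use 4000
  intro N hN
  have hN4 : (4 : ℝ) ≤ (N : ℝ) := by exact_mod_cast hN
  set SS := sSup ((fun u => |R1 u|) '' Set.Icc 0 (3 * (N : ℝ) / 2)) with hSSdef
  have hB : ∀ u ∈ Set.Icc (0 : ℝ) (3 * (N : ℝ) / 2),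
      |R1 u| ≤ (3 * (N : ℝ) / 2) * psiN (2 * N) + (3 * (N : ℝ) / 2) ^ 2 / 2 := by
    intro u hu
    obtain ⟨hu0, hu2⟩ := hu
    have hp0 := psi1_nonneg_of u hu0
    have hpU := psi1_upper N u hu0 hu2
    rw [R1, abs_le]
    constructor
    · nlinarith
    · nlinarith
  have hbdd : BddAbove ((fun u => |R1 u|) '' Set.Icc 0 (3 * (N : ℝ) / 2)) := by
    refine ⟨(3 * (N : ℝ) / 2) * psiN (2 * N) + (3 * (N : ℝ) / 2) ^ 2 / 2, ?_⟩
    rintro x ⟨u, hu, rfl⟩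
    exact hB u hu
  have hSle : ∀ u : ℝ, u ∈ Set.Icc 0 (3 * (N : ℝ) / 2) → |R1 u| ≤ SS := by
    intro u hu
    exact le_csSup hbdd ⟨u, hu, rfl⟩
  have h2mem : (2 : ℝ) ∈ Set.Icc (0 : ℝ) (3 * (N : ℝ) / 2) := by
    constructor <;> [norm_num; linarith]
  have hS2 : 2 ≤ SS := by
    have := hSle 2 h2mem
    rw [R1_two] at this
    simpa using this.trans_eq' (by norm_num)
  have hS1 : 1 ≤ SS := by linarith
  set s := Real.sqrt SS with hs
  have hs1 : 1 ≤ s := Real.one_le_sqrt.2 hS1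
  have hEE : |EE N| ≤ 3675 * (N : ℝ) * s := by
    have hterm : ∀ m ∈ Finset.Icc 1 (N - 1), |Lam0 m * Rn (N - m)| ≤ (Lam m + 1) * (105 * s) := by
      intro m hm
      simp only [Finset.mem_Icc] at hm
      rw [abs_mul]
      apply mul_le_mul
      · rw [Lam0, if_pos hm.1, abs_le]
        have := Lam_nonneg m
        constructor <;> linarith
      · exact Rn_sup_bound N hN SS hSle hS1 (N - m) (by omega)
      · exact abs_nonneg _
      · have := Lam_nonneg m; linarith
    calc |EE N| ≤ ∑ m ∈ Finset.Icc 1 (N - 1), |Lam0 m * Rn (N - m)| :=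
          Finset.abs_sum_le_sum_abs _ _
      _ ≤ ∑ m ∈ Finset.Icc 1 (N - 1), (Lam m + 1) * (105 * s) := Finset.sum_le_sum hterm
      _ = (psiN (N - 1) + ((N - 1 : ℕ) : ℝ)) * (105 * s) := by
          rw [← Finset.sum_mul, Finset.sum_add_distrib, Finset.sum_const, Nat.card_Icc]
          simp [psiN]
      _ ≤ (34 * (N : ℝ) + (N : ℝ)) * (105 * s) := by
          apply mul_le_mul_of_nonneg_right _ (by positivity)
          have h1 := psiN_cheby (N - 1)
          have h2 : ((N - 1 : ℕ) : ℝ) ≤ (N : ℝ) := by exact_mod_cast Nat.sub_le N 1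
          linarith
      _ = 3675 * (N : ℝ) * s := by ring
  have hid := main_identity N (by omega)
  have habs : |G N - (N : ℝ) ^ 2 / 2| ≤ 2 * |R1 (N : ℝ)| + (N : ℝ) / 2 + |EE N| := by
    rw [hid]
    calc |2 * R1 (N : ℝ) + (N : ℝ) / 2 + EE N|
        ≤ |2 * R1 (N : ℝ) + (N : ℝ) / 2| + |EE N| := abs_add_le _ _
      _ ≤ |2 * R1 (N : ℝ)| + |(N : ℝ) / 2| + |EE N| := by
          linarith [abs_add_le (2 * R1 (N : ℝ)) ((N : ℝ) / 2)]
      _ = 2 * |R1 (N : ℝ)| + (N : ℝ) / 2 + |EE N| := by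
          rw [abs_mul, abs_of_nonneg (by positivity : (0:ℝ) ≤ (N : ℝ) / 2)]
          norm_num
  have hhalf : (N : ℝ) / 2 ≤ (N : ℝ) * s / 2 := by nlinarith
  have hR1nn : 0 ≤ |R1 (N : ℝ)| := abs_nonneg _
  calc |G N - (N : ℝ) ^ 2 / 2| ≤ 2 * |R1 (N : ℝ)| + (N : ℝ) / 2 + |EE N| := habs
    _ ≤ 2 * |R1 (N : ℝ)| + (N : ℝ) * s / 2 + 3675 * (N : ℝ) * s := by linarith
    _ ≤ 4000 * (|R1 (N : ℝ)| + (N : ℝ) * s) := by nlinarith
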